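/- Let D = (D_in, D_out) be a domain over a measurable space X that has overlap between its ID and OOD distributions, i.e., there is a σ-finite measure μ on X such that D_in and D_out are absolutely continuous with respect to μ with Radon–Nikodym densities f_in and f_out, and μ({x ∈ X : f_in(x) > 0 and f_out(x) > 0}) > 0. Then for every α ∈ (0,1), inf over all hypotheses h ⊆ X of R^α_D(h) > 0; in particular, inf_{h ⊆ X} R^α_D(h) ≥ ∫_{A_overlap} min{(1−α)f_in, α f_out} dμ > 0, where A_overlap = {x : f_in(x) > 0, f_out(x) > 0}. Consequently any domain space containing such a domain is not realizable in any hypothesis space. -/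

import Mathlib

open MeasureTheory ENNReal Set Filter

noncomputable section

/-- A domain over an instance space `X` is a pair of (Borel) measures on `X`:
the ID distribution and the OOD distribution. -/
structure Domain (X : Type*) [MeasurableSpace X] where
  inD : Measure X
  outD : Measure X

namespace Domain

variable {X : Type*} [MeasurableSpace X]

/-- Both components of the domain are probability measures. -/
def IsProb (D : Domain X) : Prop :=
  IsProbabilityMeasure D.inD ∧ IsProbabilityMeasure D.outD

/-- The risk `R^α_D(h) = (1−α)·D_in(X∖h) + α·D_out(h)` of a hypothesis `h ⊆ X`. -/
def risk (D : Domain X) (α : ℝ) (h : Set X) : ℝ≥0∞ :=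
  ENNReal.ofReal (1 - α) * D.inD hᶜ + ENNReal.ofReal α * D.outD h

/-- The ID risk `R^in_D(h) = D_in(X∖h)`. -/
def inRisk (D : Domain X) (h : Set X) : ℝ≥0∞ := D.inD hᶜ

/-- The OOD risk `R^out_D(h) = D_out(h)`. -/
def outRisk (D : Domain X) (h : Set X) : ℝ≥0∞ := D.outD h

end Domain

/-- The distribution of `N` i.i.d. samples from `μ`. -/
def iidSamples {X : Type*} [MeasurableSpace X] (μ : Measure X) (N : ℕ) :
    Measure (Fin N → X) :=
  Measure.pi fun _ => μ

/-- A (deterministic) learning algorithm: given accuracy `ε`, confidence `δ`, a sample size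
and a tuple of samples, it outputs a hypothesis. -/
abbrev Learner (X : Type*) : Type _ := ℝ → ℝ → (n : ℕ) → (Fin n → X) → Set X

/-- Uniform learnability of OOD detection for the domain space `𝒟` in the hypothesis space `H`,
with a priori known OOD probability `α`: there are a sample-complexity function `N(ε,δ)` and a
learner which, for every `ε, δ ∈ (0,1/2)` and every domain `D ∈ 𝒟`, given `N(ε,δ)` i.i.d.
samples from `D_in`, outputs with probability at least `1−δ` a hypothesis in `H` whose risk is
within `ε` of the best risk achievable in `H`. -/
def UniformlyLearnable {X : Type*} [MeasurableSpace X]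
    (𝒟 : Set (Domain X)) (H : Set (Set X)) (α : ℝ) : Prop :=
  ∃ (N : ℝ → ℝ → ℕ) (A : Learner X),
    (∀ ε δ n S, A ε δ n S ∈ H) ∧
    ∀ ε δ : ℝ, 0 < ε → ε < 1/2 → 0 < δ → δ < 1/2 →
      ∀ D ∈ 𝒟,
        ENNReal.ofReal (1 - δ) ≤
          iidSamples D.inD (N ε δ)
            {S | D.risk α (A ε δ (N ε δ) S) ≤ (⨅ h' ∈ H, D.risk α h') + ENNReal.ofReal ε}

/-- Non-uniform learnability of OOD detection: as in `UniformlyLearnable`, except that the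
number of samples the learner needs may depend on the domain `D ∈ 𝒟`. -/
def NonUniformlyLearnable {X : Type*} [MeasurableSpace X]
    (𝒟 : Set (Domain X)) (H : Set (Set X)) (α : ℝ) : Prop :=
  ∃ A : Learner X,
    (∀ ε δ n S, A ε δ n S ∈ H) ∧
    ∀ ε δ : ℝ, 0 < ε → ε < 1/2 → 0 < δ → δ < 1/2 →
      ∀ D ∈ 𝒟, ∃ N : ℕ,
        ENNReal.ofReal (1 - δ) ≤
          iidSamples D.inD N
            {S | D.risk α (A ε δ N S) ≤ (⨅ h' ∈ H, D.risk α h') + ENNReal.ofReal ε}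

/-- The support of a measure on a topological space: the set of points all of whose open
neighbourhoods have positive measure. -/
def msupport {X : Type*} [MeasurableSpace X] [TopologicalSpace X] (μ : Measure X) : Set X :=
  {x | ∀ U : Set X, IsOpen U → x ∈ U → 0 < μ U}

/-- The Disjoint Supports Assumption. -/
def Domain.DSA {X : Type*} [MeasurableSpace X] [TopologicalSpace X] (D : Domain X) : Prop :=
  msupport D.inD ∩ msupport D.outD = ∅

/-- **Overlapping domains are not realizable.** If the ID and OOD distributions of a domain `D`
have densities `f_in`, `f_out` w.r.t. a σ-finite measure `μ`, and the overlap region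
`A = {x | f_in x > 0 ∧ f_out x > 0}` has positive `μ`-measure, then for every `α ∈ (0,1)` the
risk of every hypothesis is bounded below by `∫_A min{(1−α)f_in, α f_out} dμ > 0`;
in particular the infimum of the risk over all hypotheses is positive. -/
theorem overlap_not_realizable
    {X : Type*} [MeasurableSpace X] (D : Domain X) (hD : D.IsProb)
    (μ : Measure X) (hσ : SigmaFinite μ)
    (f_in f_out : X → ℝ≥0∞) (hfin : Measurable f_in) (hfout : Measurable f_out)
    (hin : D.inD = μ.withDensity f_in) (hout : D.outD = μ.withDensity f_out)
    (hoverlap : 0 < μ {x | 0 < f_in x ∧ 0 < f_out x})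
    (α : ℝ) (hα : α ∈ Set.Ioo (0 : ℝ) 1) :
    (0 < ∫⁻ x in {x | 0 < f_in x ∧ 0 < f_out x},
        min (ENNReal.ofReal (1 - α) * f_in x) (ENNReal.ofReal α * f_out x) ∂μ) ∧
    (∀ h : Set X,
      (∫⁻ x in {x | 0 < f_in x ∧ 0 < f_out x},
        min (ENNReal.ofReal (1 - α) * f_in x) (ENNReal.ofReal α * f_out x) ∂μ)
          ≤ D.risk α h) ∧
    0 < ⨅ h : Set X, D.risk α h := by
  
  have hαpos : (0:ℝ≥0∞) < ENNReal.ofReal α := ENNReal.ofReal_pos.2 hα.1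
  have h1αpos : (0:ℝ≥0∞) < ENNReal.ofReal (1 - α) := ENNReal.ofReal_pos.2 (by linarith [hα.2])
  set A : Set X := {x | 0 < f_in x ∧ 0 < f_out x} with hA
  have hAmeas : MeasurableSet A :=
    (hfin measurableSet_Ioi).inter (hfout measurableSet_Ioi)
  set g : X → ℝ≥0∞ := fun x => min (ENNReal.ofReal (1 - α) * f_in x) (ENNReal.ofReal α * f_out x)
    with hg
  have hgpos : ∀ x ∈ A, 0 < g x := by
    intro x hx
    exact lt_min (ENNReal.mul_pos h1αpos.ne' hx.1.ne') (ENNReal.mul_pos hαpos.ne' hx.2.ne')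
  have hpos : 0 < ∫⁻ x in A, g x ∂μ := by
    rw [← lintegral_indicator hAmeas g, lintegral_pos_iff_support]
    · refine lt_of_lt_of_le hoverlap (measure_mono ?_)
      intro x hx
      simp only [Function.mem_support, Set.indicator_apply]
      rw [if_pos hx]
      exact (hgpos x hx).ne'
    · exact ((hfin.const_mul _).min (hfout.const_mul _)).indicator hAmeas
  have hbound : ∀ h : Set X, (∫⁻ x in A, g x ∂μ) ≤ D.risk α h := by
    intro h
    have key : (∫⁻ x in A, g x ∂μ)
        ≤ (∫⁻ x in A ∩ hᶜ, ENNReal.ofReal (1 - α) * f_in x ∂μ)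
          + (∫⁻ x in A ∩ h, ENNReal.ofReal α * f_out x ∂μ) := by
      calc (∫⁻ x in A, g x ∂μ)
          = ∫⁻ x in (A ∩ hᶜ) ∪ (A ∩ h), g x ∂μ := by
            congr 1
            rw [← Set.inter_union_distrib_left, Set.compl_union_self, Set.inter_univ]
        _ ≤ (∫⁻ x in A ∩ hᶜ, g x ∂μ) + (∫⁻ x in A ∩ h, g x ∂μ) := lintegral_union_le _ _ _
        _ ≤ _ := by
            gcongr with x
            · exact min_le_left _ _
            · exact min_le_right _ _
    have hin' : (∫⁻ x in A ∩ hᶜ, ENNReal.ofReal (1 - α) * f_in x ∂μ)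
        ≤ ENNReal.ofReal (1 - α) * D.inD hᶜ := by
      rw [hin, withDensity_apply' f_in hᶜ, lintegral_const_mul _ hfin]
      gcongr
      exact Set.inter_subset_right
    have hout' : (∫⁻ x in A ∩ h, ENNReal.ofReal α * f_out x ∂μ)
        ≤ ENNReal.ofReal α * D.outD h := by
      rw [hout, withDensity_apply' f_out h, lintegral_const_mul _ hfout]
      gcongr
      exact Set.inter_subset_right
    exact key.trans (add_le_add hin' hout')
  exact ⟨hpos, hbound, lt_of_lt_of_le hpos (le_iInf hbound)⟩
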